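/- arXiv:1105.1208 — 2 statements merged into one kernel-verified Lean document; each statement's English description precedes it below -/
import Mathlib

section
/- Let Λ be a row-finite 1-graph (i.e. a k-graph with k = 1) with no sources. Then Λ is aperiodic if and only if Λ satisfies condition (L), i.e. every loop has an entrance: for every vertex v and every loop μ ∈ vΛ^p v there exists κ ∈ vΛ^p with κ ≠ μ. -/
set_option autoImplicit false

open scoped Classical

/-- A `k`-graph: a countable small category together with a degree functor
`d : Λ → ℕ^k` satisfying the unique factorization property.  Paths (morphisms)
form a single type; vertices (objects) are identified with the paths of
degree `0`. -/
structure KGraph (k : ℕ) where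
  /-- the type of paths (morphisms) of the `k`-graph -/
  Path : Type
  countable : Countable Path
  nonempty : Nonempty Path
  /-- the range (codomain) vertex of a path -/
  r : Path → Path
  /-- the source (domain) vertex of a path -/
  s : Path → Path
  /-- composition: `comp lam mu` is the path `λμ`, meaningful when `s lam = r mu` -/
  comp : Path → Path → Path
  /-- the degree functor -/
  d : Path → Fin k → ℕ
  d_r : ∀ lam, d (r lam) = 0
  d_s : ∀ lam, d (s lam) = 0
  r_r : ∀ lam, r (r lam) = r lam
  s_r : ∀ lam, s (r lam) = r lam
  r_s : ∀ lam, r (s lam) = s lam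
  s_s : ∀ lam, s (s lam) = s lam
  id_comp : ∀ lam, comp (r lam) lam = lam
  comp_id : ∀ lam, comp lam (s lam) = lam
  r_comp : ∀ lam mu, s lam = r mu → r (comp lam mu) = r lam
  s_comp : ∀ lam mu, s lam = r mu → s (comp lam mu) = s mu
  d_comp : ∀ lam mu, s lam = r mu → d (comp lam mu) = d lam + d mu
  comp_assoc : ∀ lam mu nu, s lam = r mu → s mu = r nu →
    comp (comp lam mu) nu = comp lam (comp mu nu)
  /-- the unique factorization property -/
  factor : ∀ lam (m n : Fin k → ℕ), d lam = m + n →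
    ∃! p : Path × Path, s p.1 = r p.2 ∧ comp p.1 p.2 = lam ∧ d p.1 = m ∧ d p.2 = n

namespace KGraph

variable {k : ℕ}

/-- `v` is a vertex, i.e. an element of `Λ⁰`. -/
def IsVertex (Λ : KGraph k) (v : Λ.Path) : Prop := Λ.d v = 0

/-- `v ≤ w`, i.e. `vΛw ≠ ∅`. -/
def Conn (Λ : KGraph k) (v w : Λ.Path) : Prop := ∃ lam, Λ.r lam = v ∧ Λ.s lam = w

/-- the canonical generator `e i` of `ℕ^k`. -/
def eVec (k : ℕ) (i : Fin k) : Fin k → ℕ := Pi.single i 1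

/-- `Λ` is row-finite: `vΛⁿ` is finite for every vertex `v` and `n ∈ ℕ^k`. -/
def RowFinite (Λ : KGraph k) : Prop :=
  ∀ v, Λ.IsVertex v → ∀ n : Fin k → ℕ, {lam | Λ.r lam = v ∧ Λ.d lam = n}.Finite

/-- `Λ` has no sources: `vΛ^{e i} ≠ ∅` for every vertex `v` and `i`. -/
def NoSources (Λ : KGraph k) : Prop :=
  ∀ v, Λ.IsVertex v → ∀ i : Fin k, ∃ lam, Λ.r lam = v ∧ Λ.d lam = eVec k i

/-- the middle factor `λ(m,n)`: the unique `σ` such that `λ = μστ` with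
`d μ = m`, `d σ = n - m`, `d τ = d λ - n` (junk value if no factorization exists). -/
noncomputable def seg (Λ : KGraph k) (lam : Λ.Path) (m n : Fin k → ℕ) : Λ.Path :=
  if h : ∃ sig, ∃ mu tau, Λ.s mu = Λ.r sig ∧ Λ.s sig = Λ.r tau ∧
      Λ.comp (Λ.comp mu sig) tau = lam ∧ Λ.d mu = m ∧ Λ.d sig = n - m ∧
      Λ.d tau = Λ.d lam - n
  then h.choose else lam

/-- `Λ` has no local periodicity at the vertex `v`. -/
def NoLocalPeriodicity (Λ : KGraph k) (v : Λ.Path) : Prop :=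
  ∀ m n : Fin k → ℕ, m ≠ n →
    ∃ lam, Λ.r lam = v ∧ m ⊔ n ≤ Λ.d lam ∧
      Λ.seg lam m (m + Λ.d lam - (m ⊔ n)) ≠ Λ.seg lam n (n + Λ.d lam - (m ⊔ n))

/-- `Λ` is aperiodic: no vertex has local periodicity. -/
def Aperiodic (Λ : KGraph k) : Prop := ∀ v, Λ.IsVertex v → Λ.NoLocalPeriodicity v

/-- a hereditary set of vertices -/
def Hereditary (Λ : KGraph k) (H : Set Λ.Path) : Prop :=
  ∀ v ∈ H, ∀ w, Λ.Conn v w → w ∈ H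

/-- a saturated set of vertices -/
def Saturated (Λ : KGraph k) (H : Set Λ.Path) : Prop :=
  ∀ v, Λ.IsVertex v → (∃ mu, Λ.r mu = v) →
    (∃ i : Fin k, ∀ lam, Λ.r lam = v → Λ.d lam = eVec k i → Λ.s lam ∈ H) → v ∈ H

/-- the saturation of a set of vertices: the smallest saturated set containing it -/
def saturation (Λ : KGraph k) (H : Set Λ.Path) : Set Λ.Path :=
  ⋂₀ {K : Set Λ.Path | H ⊆ K ∧ Λ.Saturated K}

/-- no local periodicity at the vertex `v` of the quotient graph `Γ(Λ \ H)`
(whose paths are the paths of `Λ` with source outside `H`). -/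
def QuotNoLocalPeriodicity (Λ : KGraph k) (H : Set Λ.Path) (v : Λ.Path) : Prop :=
  ∀ m n : Fin k → ℕ, m ≠ n →
    ∃ lam, Λ.r lam = v ∧ Λ.s lam ∉ H ∧ m ⊔ n ≤ Λ.d lam ∧
      Λ.seg lam m (m + Λ.d lam - (m ⊔ n)) ≠ Λ.seg lam n (n + Λ.d lam - (m ⊔ n))

/-- `Λ` is strongly aperiodic: `Γ(Λ \ H)` is aperiodic for every saturated
hereditary proper subset `H ⊊ Λ⁰`. -/
def StronglyAperiodic (Λ : KGraph k) : Prop :=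
  ∀ H : Set Λ.Path, (∀ v ∈ H, Λ.IsVertex v) → Λ.Hereditary H → Λ.Saturated H →
    H ≠ {v | Λ.IsVertex v} →
    ∀ v, Λ.IsVertex v → v ∉ H → Λ.QuotNoLocalPeriodicity H v

/-- a maximal tail -/
def MaximalTail (Λ : KGraph k) (γ : Set Λ.Path) : Prop :=
  γ.Nonempty ∧ (∀ v ∈ γ, Λ.IsVertex v) ∧
  (∀ v₁ ∈ γ, ∀ v₂ ∈ γ, ∃ w ∈ γ, Λ.Conn v₁ w ∧ Λ.Conn v₂ w) ∧
  (∀ v ∈ γ, ∀ i : Fin k, ∃ f, Λ.r f = v ∧ Λ.d f = eVec k i ∧ Λ.s f ∈ γ) ∧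
  (∀ v, Λ.IsVertex v → ∀ w ∈ γ, Λ.Conn v w → v ∈ γ)

end KGraph

namespace KGraph

/-- a simple loop at the vertex `v` of a `1`-graph: a loop of positive degree
whose vertices `μ(i,i)`, `0 ≤ i ≤ p - 1`, are pairwise distinct -/
def IsSimpleLoop (L : KGraph 1) (v mu : L.Path) : Prop :=
  L.r mu = v ∧ L.s mu = v ∧ L.d mu ≠ 0 ∧
  ∀ i j : ℕ, i < L.d mu 0 → j < L.d mu 0 →
    L.seg mu (fun _ => i) (fun _ => i) = L.seg mu (fun _ => j) (fun _ => j) → i = j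

/-- condition (K) for a `1`-graph: every vertex is the base of either no simple
loop or at least two distinct simple loops -/
def ConditionK (L : KGraph 1) : Prop :=
  ∀ v, L.IsVertex v →
    (¬ ∃ mu, IsSimpleLoop L v mu) ∨
    (∃ mu nu, IsSimpleLoop L v mu ∧ IsSimpleLoop L v nu ∧ mu ≠ nu)

end KGraph

namespace KGraph

lemma fin1_ext {f g : Fin 1 → ℕ} (h : f 0 = g 0) : f = g := by
  funext i
  rw [Subsingleton.elim i 0, h]

variable {k : ℕ} (Λ : KGraph k)

lemma comp_cancel {a b a' b' : Λ.Path} (hab : Λ.s a = Λ.r b) (hab' : Λ.s a' = Λ.r b')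
    (hc : Λ.comp a b = Λ.comp a' b') (hd : Λ.d a = Λ.d a') : a = a' ∧ b = b' := by
  have h1 := Λ.d_comp a b hab
  have h2 := Λ.d_comp a' b' hab'
  rw [hc, h2, hd] at h1
  have hdb : Λ.d b = Λ.d b' := (add_left_cancel h1).symm
  obtain ⟨P, hP, hPu⟩ := Λ.factor (Λ.comp a b) (Λ.d a) (Λ.d b) (Λ.d_comp a b hab)
  have e1 : (a, b) = P := hPu (a, b) ⟨hab, rfl, rfl, rfl⟩
  have e2 : (a', b') = P := hPu (a', b') ⟨hab', hc.symm, hd.symm, hdb.symm⟩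
  have e3 := e1.trans e2.symm
  exact ⟨congrArg Prod.fst e3, congrArg Prod.snd e3⟩

lemma seg_eq {lam mu sig tau : Λ.Path} {m n : Fin k → ℕ}
    (h1 : Λ.s mu = Λ.r sig) (h2 : Λ.s sig = Λ.r tau)
    (h3 : Λ.comp (Λ.comp mu sig) tau = lam)
    (hm : Λ.d mu = m) (hn : Λ.d sig = n - m) (ht : Λ.d tau = Λ.d lam - n) :
    Λ.seg lam m n = sig := by
  have hex : ∃ sig', ∃ mu' tau', Λ.s mu' = Λ.r sig' ∧ Λ.s sig' = Λ.r tau' ∧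
      Λ.comp (Λ.comp mu' sig') tau' = lam ∧ Λ.d mu' = m ∧ Λ.d sig' = n - m ∧
      Λ.d tau' = Λ.d lam - n := ⟨sig, mu, tau, h1, h2, h3, hm, hn, ht⟩
  rw [KGraph.seg, dif_pos hex]
  obtain ⟨mu', tau', h1', h2', h3', hm', hn', ht'⟩ := hex.choose_spec
  have hst' : Λ.s mu' = Λ.r (Λ.comp hex.choose tau') := by
    rw [Λ.r_comp _ _ h2']; exact h1'
  have hst : Λ.s mu = Λ.r (Λ.comp sig tau) := by
    rw [Λ.r_comp _ _ h2]; exact h1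
  have hcc : Λ.comp mu' (Λ.comp hex.choose tau') = Λ.comp mu (Λ.comp sig tau) := by
    rw [← Λ.comp_assoc _ _ _ h1' h2', ← Λ.comp_assoc _ _ _ h1 h2, h3, h3']
  have h4 := Λ.comp_cancel hst' hst hcc (by rw [hm, hm'])
  have h5 := Λ.comp_cancel h2' h2 h4.2 (by rw [hn, hn'])
  exact h5.1

lemma vertex_rs {v : Λ.Path} (hv : Λ.IsVertex v) : Λ.r v = v ∧ Λ.s v = v := by
  obtain ⟨P, hP, hPu⟩ := Λ.factor v 0 0 (by rw [hv]; simp)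
  have e1 : (Λ.r v, v) = P := hPu _ ⟨Λ.s_r v, Λ.id_comp v, Λ.d_r v, hv⟩
  have e2 : (v, Λ.s v) = P := hPu _ ⟨(Λ.r_s v).symm, Λ.comp_id v, hv, Λ.d_s v⟩
  have e3 := e1.trans e2.symm
  exact ⟨congrArg Prod.fst e3, (congrArg Prod.snd e3).symm⟩

lemma exists_path (L : KGraph 1) (hns : L.NoSources) {v : L.Path} (hv : L.IsVertex v) :
    ∀ q : ℕ, ∃ lam, L.r lam = v ∧ L.d lam = fun _ => q := by
  intro q
  induction q with
  | zero =>
    refine ⟨v, (L.vertex_rs hv).1, ?_⟩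
    rw [hv]; funext i; rfl
  | succ q ih =>
    obtain ⟨lam, hr, hd⟩ := ih
    have hsv : L.IsVertex (L.s lam) := L.d_s lam
    obtain ⟨e, hre, hde⟩ := hns _ hsv 0
    refine ⟨L.comp lam e, ?_, ?_⟩
    · rw [L.r_comp _ _ hre.symm, hr]
    · rw [L.d_comp _ _ hre.symm, hd, hde]
      apply fin1_ext
      simp [eVec, Pi.add_apply, Pi.single_eq_same]

end KGraph

/-- For row-finite `1`-graphs with no sources, aperiodicity is equivalent to
condition (L): every loop has an entrance. -/
theorem stmt0 (Λ : KGraph 1) (hrf : Λ.RowFinite) (hns : Λ.NoSources) :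
    Λ.Aperiodic ↔
      (∀ v mu : Λ.Path, Λ.IsVertex v → Λ.r mu = v → Λ.s mu = v → Λ.d mu ≠ 0 →
        ∃ kap, Λ.r kap = v ∧ Λ.d kap = Λ.d mu ∧ kap ≠ mu) := by
  constructor
  · -- aperiodic → condition (L)
    intro hap v mu hv hr hs hd
    by_contra hcon
    push_neg at hcon
    -- hcon : ∀ kap, Λ.r kap = v → Λ.d kap = Λ.d mu → kap = mu
    have hp0 : 0 < Λ.d mu 0 := by
      rcases Nat.eq_zero_or_pos (Λ.d mu 0) with h | h
      · exact absurd (KGraph.fin1_ext (by simpa using h)) hd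
      · exact h
    -- uniqueness of paths from v of each length
    have U : ∀ N : ℕ, ∀ lam lam', Λ.r lam = v → Λ.d lam = (fun _ => N) →
        Λ.r lam' = v → Λ.d lam' = (fun _ => N) → lam = lam' := by
      intro N
      induction N using Nat.strong_induction_on with
      | _ N ih =>
        intro lam lam' hr1 hd1 hr2 hd2
        rcases lt_or_ge N (Λ.d mu 0) with hNp | hNp
        · have hsv1 : Λ.IsVertex (Λ.s lam) := Λ.d_s lam
          obtain ⟨e, hre, hde⟩ := KGraph.exists_path Λ hns hsv1 (Λ.d mu 0 - N)
          have hsv2 : Λ.IsVertex (Λ.s lam') := Λ.d_s lam'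
          obtain ⟨e', hre', hde'⟩ := KGraph.exists_path Λ hns hsv2 (Λ.d mu 0 - N)
          have hc1 : Λ.comp lam e = mu := by
            apply hcon
            · rw [Λ.r_comp _ _ hre.symm, hr1]
            · rw [Λ.d_comp _ _ hre.symm, hd1, hde]
              apply KGraph.fin1_ext
              simp [Pi.add_apply]
              omega
          have hc2 : Λ.comp lam' e' = mu := by
            apply hcon
            · rw [Λ.r_comp _ _ hre'.symm, hr2]
            · rw [Λ.d_comp _ _ hre'.symm, hd2, hde']
              apply KGraph.fin1_ext
              simp [Pi.add_apply]
              omega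
          exact (Λ.comp_cancel hre.symm hre'.symm (hc1.trans hc2.symm)
            (hd1.trans hd2.symm)).1
        · obtain ⟨P, ⟨hP1, hP2, hP3, hP4⟩, _⟩ := Λ.factor lam (fun _ => Λ.d mu 0)
            (fun _ => N - Λ.d mu 0)
            (by rw [hd1]; apply KGraph.fin1_ext; simp [Pi.add_apply]; omega)
          obtain ⟨Q, ⟨hQ1, hQ2, hQ3, hQ4⟩, _⟩ := Λ.factor lam' (fun _ => Λ.d mu 0)
            (fun _ => N - Λ.d mu 0)
            (by rw [hd2]; apply KGraph.fin1_ext; simp [Pi.add_apply]; omega)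
          have hαP : P.1 = mu := by
            apply hcon
            · rw [← Λ.r_comp _ _ hP1, hP2]; exact hr1
            · rw [hP3]; exact KGraph.fin1_ext rfl
          have hαQ : Q.1 = mu := by
            apply hcon
            · rw [← Λ.r_comp _ _ hQ1, hQ2]; exact hr2
            · rw [hQ3]; exact KGraph.fin1_ext rfl
          have hrP2 : Λ.r P.2 = v := by rw [← hP1, hαP, hs]
          have hrQ2 : Λ.r Q.2 = v := by rw [← hQ1, hαQ, hs]
          have hPQ : P.2 = Q.2 := ih (N - Λ.d mu 0) (by omega) P.2 Q.2 hrP2 hP4 hrQ2 hQ4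
          rw [← hP2, ← hQ2, hαP, hαQ, hPQ]
    obtain ⟨lam, hrl, hle, hne⟩ := hap v hv 0 (Λ.d mu) (Ne.symm hd)
    have hpN : Λ.d mu 0 ≤ Λ.d lam 0 := by
      have h0 := hle 0
      simpa [Pi.sup_apply] using h0
    obtain ⟨P, ⟨hP1, hP2, hP3, hP4⟩, _⟩ := Λ.factor lam (fun _ => Λ.d lam 0 - Λ.d mu 0)
      (fun _ => Λ.d mu 0)
      (by apply KGraph.fin1_ext; simp [Pi.add_apply]; omega)
    obtain ⟨Q, ⟨hQ1, hQ2, hQ3, hQ4⟩, _⟩ := Λ.factor lam (fun _ => Λ.d mu 0)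
      (fun _ => Λ.d lam 0 - Λ.d mu 0)
      (by apply KGraph.fin1_ext; simp [Pi.add_apply]; omega)
    have hrP : Λ.r lam = Λ.r P.1 := by rw [← hP2]; exact Λ.r_comp _ _ hP1
    have hseg1 : Λ.seg lam 0 (0 + Λ.d lam - (0 ⊔ Λ.d mu)) = P.1 := by
      apply Λ.seg_eq (mu := Λ.r lam) (tau := P.2)
      · rw [Λ.s_r]; exact hrP
      · exact hP1
      · rw [hrP, Λ.id_comp, hP2]
      · exact Λ.d_r lam
      · rw [hP3]; apply KGraph.fin1_ext
        simp [Pi.add_apply, Pi.sub_apply, Pi.sup_apply, Pi.zero_apply]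
      · rw [hP4]; apply KGraph.fin1_ext
        simp [Pi.add_apply, Pi.sub_apply, Pi.sup_apply, Pi.zero_apply]
        omega
    have hQmu : Q.1 = mu := by
      apply hcon
      · rw [← Λ.r_comp _ _ hQ1, hQ2]; exact hrl
      · rw [hQ3]; exact KGraph.fin1_ext rfl
    have hseg2 : Λ.seg lam (Λ.d mu) (Λ.d mu + Λ.d lam - (0 ⊔ Λ.d mu)) = Q.2 := by
      apply Λ.seg_eq (mu := Q.1) (tau := Λ.s Q.2)
      · exact hQ1
      · exact (Λ.r_s Q.2).symm
      · rw [hQ2]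
        have hsq : Λ.s Q.2 = Λ.s lam := by rw [← hQ2]; exact (Λ.s_comp _ _ hQ1).symm
        rw [hsq, Λ.comp_id]
      · rw [hQ3]; exact KGraph.fin1_ext rfl
      · rw [hQ4]; apply KGraph.fin1_ext
        simp [Pi.add_apply, Pi.sub_apply, Pi.sup_apply, Pi.zero_apply]
      · rw [Λ.d_s]; apply KGraph.fin1_ext
        simp [Pi.add_apply, Pi.sub_apply, Pi.sup_apply, Pi.zero_apply]
    have hrP1 : Λ.r P.1 = v := by rw [← hrP]; exact hrl
    have hrQ2 : Λ.r Q.2 = v := by rw [← hQ1, hQmu, hs]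
    have := U (Λ.d lam 0 - Λ.d mu 0) P.1 Q.2 hrP1 hP3 hrQ2 hQ4
    rw [hseg1, hseg2] at hne
    exact hne this
  · -- condition (L) → aperiodic
    intro hL v hv
    have key : ∀ m n : Fin 1 → ℕ, m 0 < n 0 →
        ∃ lam, Λ.r lam = v ∧ m ⊔ n ≤ Λ.d lam ∧
          Λ.seg lam m (m + Λ.d lam - (m ⊔ n)) ≠ Λ.seg lam n (n + Λ.d lam - (m ⊔ n)) := by
      intro m n hmn
      by_contra hc
      push_neg at hc
      obtain ⟨x, hrx, hdx⟩ := KGraph.exists_path Λ hns hv (m 0 + 2 * (n 0 - m 0))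
      obtain ⟨P, ⟨hP1, hP2, hP3, hP4⟩, _⟩ := Λ.factor x (fun _ => m 0)
        (fun _ => 2 * (n 0 - m 0))
        (by rw [hdx]; apply KGraph.fin1_ext; simp [Pi.add_apply])
      obtain ⟨Q, ⟨hQ1, hQ2, hQ3, hQ4⟩, _⟩ := Λ.factor P.2 (fun _ => n 0 - m 0)
        (fun _ => n 0 - m 0)
        (by rw [hP4]; apply KGraph.fin1_ext; simp [Pi.add_apply]; omega)
      have hab : Λ.s P.1 = Λ.r Q.1 := by rw [hP1, ← hQ2, Λ.r_comp _ _ hQ1]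
      have habc : Λ.comp (Λ.comp P.1 Q.1) Q.2 = x := by
        rw [Λ.comp_assoc _ _ _ hab hQ1, hQ2, hP2]
      have hsab : Λ.s (Λ.comp P.1 Q.1) = Λ.r Q.2 := by rw [Λ.s_comp _ _ hab]; exact hQ1
      have hled : ∀ lam, Λ.d lam = (fun _ => m 0 + 2 * (n 0 - m 0)) → m ⊔ n ≤ Λ.d lam := by
        intro lam h
        rw [h]
        refine Pi.le_def.mpr fun i => ?_
        rw [Subsingleton.elim i 0]
        simp [Pi.sup_apply]
        omega
      -- hc applied to x : b = c
      have E1 := hc x hrx (hled x hdx)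
      have hseg1 : Λ.seg x m (m + Λ.d x - (m ⊔ n)) = Q.1 := by
        apply Λ.seg_eq (mu := P.1) (tau := Q.2) hab hQ1 habc
        · rw [hP3]; exact KGraph.fin1_ext rfl
        · rw [hQ3]; apply KGraph.fin1_ext
          simp [hdx, Pi.add_apply, Pi.sub_apply, Pi.sup_apply]
          omega
        · rw [hQ4]; apply KGraph.fin1_ext
          simp [hdx, Pi.add_apply, Pi.sub_apply, Pi.sup_apply]
          omega
      have hsc : Λ.s Q.2 = Λ.s x := by rw [← habc]; exact (Λ.s_comp _ _ hsab).symm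
      have hseg2 : Λ.seg x n (n + Λ.d x - (m ⊔ n)) = Q.2 := by
        apply Λ.seg_eq (mu := Λ.comp P.1 Q.1) (tau := Λ.s Q.2) hsab (Λ.r_s Q.2).symm
        · rw [habc, hsc, Λ.comp_id]
        · rw [Λ.d_comp _ _ hab, hP3, hQ3]; apply KGraph.fin1_ext
          simp [Pi.add_apply]; omega
        · rw [hQ4]; apply KGraph.fin1_ext
          simp [hdx, Pi.add_apply, Pi.sub_apply, Pi.sup_apply]
          omega
        · rw [Λ.d_s]; apply KGraph.fin1_ext
          simp [hdx, Pi.add_apply, Pi.sub_apply, Pi.sup_apply]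
          omega
      have hbc : Q.1 = Q.2 := by rw [← hseg1, ← hseg2]; exact E1
      -- Q.1 is a loop at w := r Q.1
      have hsb : Λ.s Q.1 = Λ.r Q.1 := by rw [hQ1, ← hbc]
      have hw : Λ.IsVertex (Λ.r Q.1) := Λ.d_r Q.1
      have hdb : Λ.d Q.1 ≠ 0 := by
        intro h
        have h0 := congrFun h 0
        rw [hQ3] at h0
        simp at h0
        omega
      obtain ⟨kap, hrk, hdk, hkb⟩ := hL (Λ.r Q.1) Q.1 hw rfl hsb hdb
      -- consider x' = a · b · kap
      have hbk : Λ.s Q.1 = Λ.r kap := by rw [hsb]; exact hrk.symm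
      have habk2 : Λ.s P.1 = Λ.r (Λ.comp Q.1 kap) := by rw [Λ.r_comp _ _ hbk]; exact hab
      set y := Λ.comp P.1 (Λ.comp Q.1 kap) with hy
      have habk : Λ.comp (Λ.comp P.1 Q.1) kap = y := Λ.comp_assoc _ _ _ hab hbk
      have hsabk : Λ.s (Λ.comp P.1 Q.1) = Λ.r kap := by rw [Λ.s_comp _ _ hab]; exact hbk
      have hra : Λ.r P.1 = v := by rw [← Λ.r_comp _ _ hP1, hP2]; exact hrx
      have hry : Λ.r y = v := by rw [hy, Λ.r_comp _ _ habk2]; exact hra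
      have hdkap : Λ.d kap = fun _ => n 0 - m 0 := by rw [hdk, hQ3]
      have hdy : Λ.d y = fun _ => m 0 + 2 * (n 0 - m 0) := by
        rw [hy, Λ.d_comp _ _ habk2, Λ.d_comp _ _ hbk, hP3, hQ3, hdkap]
        apply KGraph.fin1_ext
        simp [Pi.add_apply]; omega
      have E2 := hc y hry (hled y hdy)
      have hseg1' : Λ.seg y m (m + Λ.d y - (m ⊔ n)) = Q.1 := by
        apply Λ.seg_eq (mu := P.1) (tau := kap) hab hbk habk
        · rw [hP3]; exact KGraph.fin1_ext rfl
        · rw [hQ3]; apply KGraph.fin1_ext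
          simp [hdy, Pi.add_apply, Pi.sub_apply, Pi.sup_apply]
          omega
        · rw [hdkap]; apply KGraph.fin1_ext
          simp [hdy, Pi.add_apply, Pi.sub_apply, Pi.sup_apply]
          omega
      have hsk : Λ.s kap = Λ.s y := by rw [← habk]; exact (Λ.s_comp _ _ hsabk).symm
      have hseg2' : Λ.seg y n (n + Λ.d y - (m ⊔ n)) = kap := by
        apply Λ.seg_eq (mu := Λ.comp P.1 Q.1) (tau := Λ.s kap) hsabk (Λ.r_s kap).symm
        · rw [habk, hsk, Λ.comp_id]
        · rw [Λ.d_comp _ _ hab, hP3, hQ3]; apply KGraph.fin1_ext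
          simp [Pi.add_apply]; omega
        · rw [hdkap]; apply KGraph.fin1_ext
          simp [hdy, Pi.add_apply, Pi.sub_apply, Pi.sup_apply]
          omega
        · rw [Λ.d_s]; apply KGraph.fin1_ext
          simp [hdy, Pi.add_apply, Pi.sub_apply, Pi.sup_apply]
          omega
      rw [hseg1', hseg2'] at E2
      exact hkb E2.symm
    intro m n hmn
    have h0 : m 0 ≠ n 0 := fun h => hmn (KGraph.fin1_ext h)
    rcases lt_or_gt_of_ne h0 with h | h
    · exact key m n h
    · obtain ⟨lam, h1, h2, h3⟩ := key n m h
      refine ⟨lam, h1, by rwa [sup_comm n m] at h2, ?_⟩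
      rw [sup_comm n m] at h3
      exact h3.symm
end

section
/- Let Λ be a row-finite 2-graph with no sources. If every vertex of Λ has a (1,1)-aperiodic quartet, then Λ is strongly aperiodic. -/
set_option autoImplicit false

open scoped Classical

namespace KGraph

/-- an `(a,b)`-aperiodic quartet at the vertex `u` of a `2`-graph -/
def AperiodicQuartet (L : KGraph 2) (u : L.Path) (a b : ℕ)
    (al1 al2 be1 be2 : L.Path) : Prop :=
  0 < a ∧ 0 < b ∧
  al1 ≠ al2 ∧ be1 ≠ be2 ∧
  L.r al1 = u ∧ L.s al1 = u ∧ L.d al1 = Pi.single (0 : Fin 2) a ∧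
  L.r al2 = u ∧ L.s al2 = u ∧ L.d al2 = Pi.single (0 : Fin 2) a ∧
  L.r be1 = u ∧ L.s be1 = u ∧ L.d be1 = Pi.single (1 : Fin 2) b ∧
  L.r be2 = u ∧ L.s be2 = u ∧ L.d be2 = Pi.single (1 : Fin 2) b ∧
  L.comp be2 al1 = L.comp al1 be2 ∧
  L.comp be2 al2 = L.comp al2 be2 ∧
  L.comp be1 al1 = L.comp al2 be1 ∧
  L.comp be1 al2 = L.comp al1 be1

end KGraph
namespace KGraph

lemma isVertex_r_s {k : ℕ} {Λ : KGraph k} {v : Λ.Path} (hv : Λ.IsVertex v) :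
    Λ.r v = v ∧ Λ.s v = v := by
  obtain ⟨p, _, hu⟩ := Λ.factor v 0 0 (by show Λ.d v = 0 + 0; rw [add_zero]; exact hv)
  have h1 : (Λ.r v, v) = p := hu _ ⟨Λ.s_r v, Λ.id_comp v, Λ.d_r v, hv⟩
  have h2 : (v, Λ.s v) = p := hu _ ⟨(Λ.r_s v).symm, Λ.comp_id v, hv, Λ.d_s v⟩
  have h3 := h1.trans h2.symm
  exact ⟨congrArg Prod.fst h3, (congrArg Prod.snd h3).symm⟩

/-- a vertex of a `k`-graph, packaged with its basic properties -/
def Vx (Λ : KGraph 2) : Type := {v : Λ.Path // Λ.r v = v ∧ Λ.s v = v}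

/-- the loops based at a vertex -/
def Lp (Λ : KGraph 2) (u : Λ.Vx) : Type := {x : Λ.Path // Λ.r x = u.1 ∧ Λ.s x = u.1}

noncomputable instance (Λ : KGraph 2) (u : Λ.Vx) : Monoid (Λ.Lp u) where
  mul x y := ⟨Λ.comp x.1 y.1,
    by rw [Λ.r_comp _ _ (x.2.2.trans y.2.1.symm)]; exact x.2.1,
    by rw [Λ.s_comp _ _ (x.2.2.trans y.2.1.symm)]; exact y.2.2⟩
  one := ⟨u.1, u.2⟩
  mul_assoc x y z := Subtype.ext
    (Λ.comp_assoc _ _ _ (x.2.2.trans y.2.1.symm) (y.2.2.trans z.2.1.symm))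
  one_mul x := Subtype.ext (by
    show Λ.comp u.1 x.1 = x.1
    have := Λ.id_comp x.1
    rwa [x.2.1] at this)
  mul_one x := Subtype.ext (by
    show Λ.comp x.1 u.1 = x.1
    have := Λ.comp_id x.1
    rwa [x.2.2] at this)

lemma Lp.mul_val {Λ : KGraph 2} {u : Λ.Vx} (x y : Λ.Lp u) :
    (x * y).val = Λ.comp x.val y.val := rfl

lemma Lp.one_val {Λ : KGraph 2} {u : Λ.Vx} : (1 : Λ.Lp u).val = u.1 := rfl

lemma Lp.d_mul {Λ : KGraph 2} {u : Λ.Vx} (x y : Λ.Lp u) :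
    Λ.d (x * y).val = Λ.d x.val + Λ.d y.val :=
  Λ.d_comp _ _ (x.2.2.trans y.2.1.symm)

lemma Lp.d_one {Λ : KGraph 2} {u : Λ.Vx} : Λ.d (1 : Λ.Lp u).val = 0 := by
  have := Λ.d_r u.1
  rwa [u.2.1] at this

lemma Lp.d_pow {Λ : KGraph 2} {u : Λ.Vx} (x : Λ.Lp u) (s : ℕ) :
    Λ.d ((x ^ s).val) = s • Λ.d x.val := by
  induction s with
  | zero => rw [pow_zero, Lp.d_one, zero_smul]
  | succ t ih => rw [pow_succ, Lp.d_mul, ih, succ_nsmul]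

lemma seg_eq_of {Λ : KGraph 2} (lam mu sig tau : Λ.Path)
    (h1 : Λ.s mu = Λ.r sig) (h2 : Λ.s sig = Λ.r tau)
    (h3 : Λ.comp (Λ.comp mu sig) tau = lam)
    (m n : Fin 2 → ℕ) (hm : Λ.d mu = m) (hs : Λ.d sig = n - m)
    (ht : Λ.d tau = Λ.d lam - n) :
    Λ.seg lam m n = sig := by
  have hex : ∃ sig', ∃ mu' tau', Λ.s mu' = Λ.r sig' ∧ Λ.s sig' = Λ.r tau' ∧
      Λ.comp (Λ.comp mu' sig') tau' = lam ∧ Λ.d mu' = m ∧ Λ.d sig' = n - m ∧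
      Λ.d tau' = Λ.d lam - n := ⟨sig, mu, tau, h1, h2, h3, hm, hs, ht⟩
  unfold KGraph.seg
  rw [dif_pos hex]
  obtain ⟨mu', tau', g1, g2, g3, g4, g5, g6⟩ := hex.choose_spec
  have hsc : Λ.s (Λ.comp mu sig) = Λ.r tau := by rw [Λ.s_comp _ _ h1]; exact h2
  have hd1 : Λ.d (Λ.comp mu sig) = m + (n - m) := by rw [Λ.d_comp _ _ h1, hm, hs]
  have hdlam : Λ.d lam = (m + (n - m)) + (Λ.d lam - n) := by
    conv_lhs => rw [← h3]
    rw [Λ.d_comp _ _ hsc, hd1, ht, ← h3, Λ.d_comp _ _ hsc, hd1, ht]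
  obtain ⟨p, _, hu⟩ := Λ.factor lam (m + (n - m)) (Λ.d lam - n) hdlam
  have e1 : (Λ.comp mu sig, tau) = p := hu _ ⟨hsc, h3, hd1, ht⟩
  have e2 : (Λ.comp mu' hex.choose, tau') = p := hu _
    ⟨by rw [Λ.s_comp _ _ g1]; exact g2, g3, by rw [Λ.d_comp _ _ g1, g4, g5], g6⟩
  have ecc : Λ.comp mu' hex.choose = Λ.comp mu sig :=
    (congrArg Prod.fst e2).trans (congrArg Prod.fst e1).symm
  obtain ⟨q, _, hu2⟩ := Λ.factor (Λ.comp mu sig) m (n - m) hd1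
  have f1 : (mu, sig) = q := hu2 _ ⟨h1, rfl, hm, hs⟩
  have f2 : (mu', hex.choose) = q := hu2 _ ⟨g1, ecc, g4, g5⟩
  exact (congrArg Prod.snd f2).trans (congrArg Prod.snd f1).symm

end KGraph
namespace KGraph

lemma quartet_key (Λ : KGraph 2) {v : Λ.Path} (hv : Λ.IsVertex v)
    (hq : ∃ al1 al2 be1 be2, AperiodicQuartet Λ v 1 1 al1 al2 be1 be2) :
    ∀ m n : Fin 2 → ℕ, m ≠ n →
    ∃ lam, Λ.r lam = v ∧ Λ.s lam = v ∧ m ⊔ n ≤ Λ.d lam ∧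
      Λ.seg lam m (m + Λ.d lam - (m ⊔ n)) ≠ Λ.seg lam n (n + Λ.d lam - (m ⊔ n)) := by
  obtain ⟨al1, al2, be1, be2, _, _, hnea, hneb, ra1, sa1, da1, ra2, sa2, da2,
    rb1, sb1, db1, rb2, sb2, db2, q21, q22, q11, q12⟩ := hq
  obtain ⟨hrv, hsv⟩ := isVertex_r_s hv
  let uu : Λ.Vx := ⟨v, hrv, hsv⟩
  let A1 : Λ.Lp uu := ⟨al1, ra1, sa1⟩
  let A2 : Λ.Lp uu := ⟨al2, ra2, sa2⟩
  let B1 : Λ.Lp uu := ⟨be1, rb1, sb1⟩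
  let B2 : Λ.Lp uu := ⟨be2, rb2, sb2⟩
  have dA1 : Λ.d (A1 : Λ.Lp uu).val = Pi.single (0 : Fin 2) 1 := da1
  have dA2 : Λ.d (A2 : Λ.Lp uu).val = Pi.single (0 : Fin 2) 1 := da2
  have dB1 : Λ.d (B1 : Λ.Lp uu).val = Pi.single (1 : Fin 2) 1 := db1
  have dB2 : Λ.d (B2 : Λ.Lp uu).val = Pi.single (1 : Fin 2) 1 := db2
  have c1 : Commute B2 A1 := Subtype.ext q21
  have c2 : Commute B2 A2 := Subtype.ext q22
  have s00 : (Pi.single (0:Fin 2) (1:ℕ) : Fin 2 → ℕ) 0 = 1 := by simp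
  have s01 : (Pi.single (0:Fin 2) (1:ℕ) : Fin 2 → ℕ) 1 = 0 := by simp [Pi.single_apply]
  have s10 : (Pi.single (1:Fin 2) (1:ℕ) : Fin 2 → ℕ) 0 = 0 := by simp [Pi.single_apply]
  have s11 : (Pi.single (1:Fin 2) (1:ℕ) : Fin 2 → ℕ) 1 = 1 := by simp
  have key1 : ∀ (a b c : ℕ) (X : Λ.Lp uu), Commute B2 X →
      A1 ^ a * B2 ^ b * (X * B2 ^ c) = A1 ^ a * X * B2 ^ (b + c) := by
    intro a b c X hX
    rw [mul_assoc, ← mul_assoc (B2 ^ b), (hX.pow_left b).eq, mul_assoc, ← pow_add,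
      ← mul_assoc]
  suffices key : ∀ m n : Fin 2 → ℕ, (m 0 < n 0 ∨ (m 0 = n 0 ∧ m 1 < n 1)) →
      ∃ lam, Λ.r lam = v ∧ Λ.s lam = v ∧ m ⊔ n ≤ Λ.d lam ∧
        Λ.seg lam m (m + Λ.d lam - (m ⊔ n)) ≠ Λ.seg lam n (n + Λ.d lam - (m ⊔ n)) by
    intro m n hmn
    rcases lt_trichotomy (m 0) (n 0) with h0 | h0 | h0
    · exact key m n (Or.inl h0)
    · rcases lt_trichotomy (m 1) (n 1) with h1 | h1 | h1
      · exact key m n (Or.inr ⟨h0, h1⟩)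
      · exact absurd (funext fun i => by fin_cases i <;> assumption) hmn
      · obtain ⟨lam, e1, e2, e3, e4⟩ := key n m (Or.inr ⟨h0.symm, h1⟩)
        exact ⟨lam, e1, e2, by rwa [sup_comm], by rw [sup_comm]; exact e4.symm⟩
    · obtain ⟨lam, e1, e2, e3, e4⟩ := key n m (Or.inl h0)
      exact ⟨lam, e1, e2, by rwa [sup_comm], by rw [sup_comm]; exact e4.symm⟩
  rintro m n (h0 | ⟨h0, h1⟩)
  · -- m 0 < n 0
    set p2 := max (m 1) (n 1) with hp2
    set k1 := n 0 - m 0 - 1 with hk1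
    set r1 := p2 - m 1 with hr1
    set r2 := p2 - n 1 with hr2
    have hA : Commute B2 (A1 ^ (k1 + 1) * A2) := (c1.pow_right _).mul_right c2
    have hL : (A1 ^ m 0 * B2 ^ m 1) * A1 * (A1 ^ k1 * (A2 * B2 ^ r1))
        = (A1 ^ n 0 * B2 ^ n 1) * A2 * B2 ^ r2 := by
      have e1 : m 0 + (k1 + 1) = n 0 := by omega
      have e2 : m 1 + r1 = p2 := by omega
      have e3 : n 1 + r2 = p2 := by omega
      rw [mul_assoc (A1 ^ m 0 * B2 ^ m 1) A1, ← mul_assoc A1 (A1 ^ k1),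
        ← pow_succ' A1 k1, ← mul_assoc (A1 ^ (k1 + 1)) A2, key1 _ _ _ _ hA,
        ← mul_assoc (A1 ^ m 0) (A1 ^ (k1 + 1)), ← pow_add, e1, e2,
        mul_assoc (A1 ^ n 0 * B2 ^ n 1) A2, key1 _ _ _ _ c2, e3]
    set L : Λ.Lp uu := (A1 ^ m 0 * B2 ^ m 1) * A1 * (A1 ^ k1 * (A2 * B2 ^ r1)) with hLd
    have hd0 : Λ.d L.val 0 = n 0 + 1 := by
      rw [hLd]
      simp only [Lp.d_mul, Lp.d_pow, dA1, dA2, dB2, Pi.add_apply, Pi.smul_apply,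
        smul_eq_mul, s00, s10]
      omega
    have hd1 : Λ.d L.val 1 = p2 := by
      rw [hLd]
      simp only [Lp.d_mul, Lp.d_pow, dA1, dA2, dB2, Pi.add_apply, Pi.smul_apply,
        smul_eq_mul, s01, s11]
      omega
    refine ⟨L.val, L.2.1, L.2.2, ?_, ?_⟩
    · intro i
      fin_cases i <;>
        simp only [Fin.zero_eta, Fin.mk_one, Pi.sup_apply, hd0, hd1] <;> omega
    · have e1 : Λ.seg L.val m (m + Λ.d L.val - (m ⊔ n)) = al1 := by
        refine seg_eq_of L.val (A1 ^ m 0 * B2 ^ m 1).val al1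
          (A1 ^ k1 * (A2 * B2 ^ r1)).val
          ((A1 ^ m 0 * B2 ^ m 1).2.2.trans ra1.symm)
          (sa1.trans (A1 ^ k1 * (A2 * B2 ^ r1)).2.1.symm) rfl m _ ?_ ?_ ?_
        · funext i
          fin_cases i <;>
            simp only [Fin.zero_eta, Fin.mk_one, Lp.d_mul, Lp.d_pow, dA1, dB2, Pi.add_apply, Pi.smul_apply,
              smul_eq_mul, s00, s01, s10, s11] <;> omega
        · funext i
          fin_cases i <;>
            simp only [Fin.zero_eta, Fin.mk_one, da1, Pi.sub_apply, Pi.add_apply, Pi.sup_apply,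
              hd0, hd1, s00, s01] <;> omega
        · funext i
          fin_cases i <;>
            simp only [Fin.zero_eta, Fin.mk_one, Lp.d_mul, Lp.d_pow, dA1, dA2, dB2, Pi.add_apply, Pi.smul_apply,
              smul_eq_mul, Pi.sub_apply, Pi.sup_apply, hd0, hd1,
              s00, s01, s10, s11] <;> omega
      have e2 : Λ.seg L.val n (n + Λ.d L.val - (m ⊔ n)) = al2 := by
        refine seg_eq_of L.val (A1 ^ n 0 * B2 ^ n 1).val al2 (B2 ^ r2).val
          ((A1 ^ n 0 * B2 ^ n 1).2.2.trans ra2.symm)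
          (sa2.trans (B2 ^ r2).2.1.symm) (congrArg Subtype.val hL.symm) n _ ?_ ?_ ?_
        · funext i
          fin_cases i <;>
            simp only [Fin.zero_eta, Fin.mk_one, Lp.d_mul, Lp.d_pow, dA1, dB2, Pi.add_apply, Pi.smul_apply,
              smul_eq_mul, s00, s01, s10, s11] <;> omega
        · funext i
          fin_cases i <;>
            simp only [Fin.zero_eta, Fin.mk_one, da2, Pi.sub_apply, Pi.add_apply, Pi.sup_apply,
              hd0, hd1, s00, s01] <;> omega
        · funext i
          fin_cases i <;>
            simp only [Fin.zero_eta, Fin.mk_one, Lp.d_pow, dB2, Pi.smul_apply, smul_eq_mul, Pi.sub_apply,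
              Pi.add_apply, Pi.sup_apply, hd0, hd1, s10, s11] <;> omega
      rw [e1, e2]
      exact hnea
  · -- m 0 = n 0, m 1 < n 1
    set k2 := n 1 - m 1 - 1 with hk2
    have cc : Commute (A2 ^ m 0) (B2 ^ (k2 + 1)) := c2.symm.pow_pow _ _
    have hL : (B2 ^ m 1 * A2 ^ m 0) * B2 * (B2 ^ k2 * B1)
        = (B2 ^ n 1 * A2 ^ m 0) * B1 * 1 := by
      have e1 : m 1 + (k2 + 1) = n 1 := by omega
      rw [mul_one, mul_assoc (B2 ^ m 1 * A2 ^ m 0) B2, ← mul_assoc B2 (B2 ^ k2),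
        ← pow_succ' B2 k2, ← mul_assoc (B2 ^ m 1 * A2 ^ m 0) (B2 ^ (k2 + 1)) B1,
        mul_assoc (B2 ^ m 1) (A2 ^ m 0) (B2 ^ (k2 + 1)), cc.eq,
        ← mul_assoc (B2 ^ m 1) (B2 ^ (k2 + 1)) (A2 ^ m 0), ← pow_add B2 (m 1) (k2 + 1),
        e1]
    set L : Λ.Lp uu := (B2 ^ m 1 * A2 ^ m 0) * B2 * (B2 ^ k2 * B1) with hLd
    have hd0 : Λ.d L.val 0 = m 0 := by
      rw [hLd]
      simp only [Lp.d_mul, Lp.d_pow, dA2, dB1, dB2, Pi.add_apply, Pi.smul_apply,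
        smul_eq_mul, s00, s10]
      omega
    have hd1 : Λ.d L.val 1 = n 1 + 1 := by
      rw [hLd]
      simp only [Lp.d_mul, Lp.d_pow, dA2, dB1, dB2, Pi.add_apply, Pi.smul_apply,
        smul_eq_mul, s01, s11]
      omega
    refine ⟨L.val, L.2.1, L.2.2, ?_, ?_⟩
    · intro i
      fin_cases i <;>
        simp only [Fin.zero_eta, Fin.mk_one, Pi.sup_apply, hd0, hd1] <;> omega
    · have e1 : Λ.seg L.val m (m + Λ.d L.val - (m ⊔ n)) = be2 := by
        refine seg_eq_of L.val (B2 ^ m 1 * A2 ^ m 0).val be2 (B2 ^ k2 * B1).val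
          ((B2 ^ m 1 * A2 ^ m 0).2.2.trans rb2.symm)
          (sb2.trans (B2 ^ k2 * B1).2.1.symm) rfl m _ ?_ ?_ ?_
        · funext i
          fin_cases i <;>
            simp only [Fin.zero_eta, Fin.mk_one, Lp.d_mul, Lp.d_pow, dA2, dB2, Pi.add_apply, Pi.smul_apply,
              smul_eq_mul, s00, s01, s10, s11] <;> omega
        · funext i
          fin_cases i <;>
            simp only [Fin.zero_eta, Fin.mk_one, db2, Pi.sub_apply, Pi.add_apply, Pi.sup_apply,
              hd0, hd1, s10, s11] <;> omega
        · funext i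
          fin_cases i <;>
            simp only [Fin.zero_eta, Fin.mk_one, Lp.d_mul, Lp.d_pow, dB1, dB2, Pi.add_apply, Pi.smul_apply,
              smul_eq_mul, Pi.sub_apply, Pi.sup_apply, hd0, hd1,
              s00, s01, s10, s11] <;> omega
      have e2 : Λ.seg L.val n (n + Λ.d L.val - (m ⊔ n)) = be1 := by
        refine seg_eq_of L.val (B2 ^ n 1 * A2 ^ m 0).val be1 ((1 : Λ.Lp uu)).val
          ((B2 ^ n 1 * A2 ^ m 0).2.2.trans rb1.symm)
          (sb1.trans ((1 : Λ.Lp uu)).2.1.symm) (congrArg Subtype.val hL.symm) n _ ?_ ?_ ?_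
        · funext i
          fin_cases i <;>
            simp only [Fin.zero_eta, Fin.mk_one, Lp.d_mul, Lp.d_pow, dA2, dB2, Pi.add_apply, Pi.smul_apply,
              smul_eq_mul, s00, s01, s10, s11] <;> omega
        · funext i
          fin_cases i <;>
            simp only [Fin.zero_eta, Fin.mk_one, db1, Pi.sub_apply, Pi.add_apply, Pi.sup_apply,
              hd0, hd1, s10, s11] <;> omega
        · funext i
          fin_cases i <;>
            simp only [Fin.zero_eta, Fin.mk_one, Lp.d_one, Pi.zero_apply, Pi.sub_apply, Pi.add_apply,
              Pi.sup_apply, hd0, hd1] <;> omega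
      rw [e1, e2]
      exact hneb.symm

end KGraph

/-- If every vertex has a `(1,1)`-aperiodic quartet, then `Λ` is strongly
aperiodic. -/
theorem stmt6 (Λ : KGraph 2) (hrf : Λ.RowFinite) (hns : Λ.NoSources)
    (h : ∀ v, Λ.IsVertex v → ∃ al1 al2 be1 be2,
      KGraph.AperiodicQuartet Λ v 1 1 al1 al2 be1 be2) :
    Λ.StronglyAperiodic := by
  intro H hHv hher hsat hne w hw hwH m n hmn
  obtain ⟨lam, h1, h2, h3, h4⟩ := KGraph.quartet_key Λ hw (h w hw) m n hmn
  exact ⟨lam, h1, by rw [h2]; exact hwH, h3, h4⟩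
end
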